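/- arXiv:2303.08944 — 4 statements merged into one kernel-verified Lean document; each statement's English description precedes it below -/
import Mathlib

section
/- Let H be a hypothesis class of binary classifiers on X with VC dimension d, and let U : X → Finset X satisfy |U(x)| ≤ k for all x. Define the robust loss class L = {(x,y) ↦ max_{z ∈ U(x)} 1[h(z) ≠ y] : h ∈ H}, viewed as a class of binary functions on X × Y. Then the VC dimension of L is at most O(d · log k) (more precisely, if L shatters a set of size m then m ≤ c · d · log(m k) for an absolute constant c, which implies vc(L) ≤ C d log k for constants). -/
open scoped Classical

/-- A class `F` of binary functions on `Z` shatters a finite set `s`. -/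
def Shatters {Z : Type*} (F : Set (Z → Bool)) (s : Finset Z) : Prop :=
  ∀ b : Z → Bool, ∃ f ∈ F, ∀ z ∈ s, f z = b z

private lemma sum_choose_le_pow (n d : ℕ) :
    ∑ i ∈ Finset.range (d + 1), n.choose i ≤ (n + 1) ^ d := by
  induction d with
  | zero => simp
  | succ d ih =>
    rw [Finset.sum_range_succ, pow_succ]
    have h1 : n.choose (d + 1) ≤ n ^ (d + 1) := Nat.choose_le_pow n (d + 1)
    have h2 : n ^ (d + 1) ≤ n * (n + 1) ^ d := by
      rw [pow_succ']
      exact Nat.mul_le_mul_left n (Nat.pow_le_pow_left (Nat.le_succ n) d)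
    calc ∑ i ∈ Finset.range (d + 1), n.choose i + n.choose (d + 1)
        ≤ (n + 1) ^ d + n * (n + 1) ^ d := Nat.add_le_add ih (h1.trans h2)
      _ = (n + 1) ^ d * (n + 1) := by ring

/-- VC dimension of the robust loss class. If `H` has VC dimension at most `d`
and `|U(x)| ≤ k`, then any set shattered by the robust loss class
`L = {(x,y) ↦ max_{z∈U(x)} 1[h(z)≠y] : h ∈ H}` of size `m` satisfies
`m ≤ c · d · log(m k)` for an absolute constant `c`, so `vc(L) = O(d log k)`. -/
theorem stmt2 : ∃ c : ℝ, 0 < c ∧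
    ∀ {X : Type} (H : Set (X → Bool)) (d k : ℕ), 2 ≤ k →
      (∀ s : Finset X, Shatters H s → s.card ≤ d) →
      ∀ (U : X → Finset X), (∀ x, (U x).card ≤ k) →
        ∀ s : Finset (X × Bool),
          Shatters {f : X × Bool → Bool |
              ∃ h ∈ H, ∀ p : X × Bool, f p = decide (∃ z ∈ U p.1, h z ≠ p.2)} s →
          (s.card : ℝ) ≤ c * d * Real.log (s.card * k) := by
  refine ⟨3, by norm_num, ?_⟩
  intro X H d k hk hvc U hU s hsh
  set m := s.card with hm
  -- trivial case m = 0
  rcases Nat.eq_zero_or_pos m with hm0 | hm1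
  · rw [hm0]
    simp [Real.log_zero]
  -- inflated set
  set T : Finset X := s.biUnion (fun p => U p.1) with hT
  have hTcard : T.card ≤ m * k := by
    calc T.card ≤ ∑ p ∈ s, (U p.1).card := Finset.card_biUnion_le
      _ ≤ ∑ _p ∈ s, k := Finset.sum_le_sum fun p _ => hU p.1
      _ = m * k := by rw [Finset.sum_const, smul_eq_mul]
  -- the trace family of H on T
  set A : Finset (Finset X) :=
    T.powerset.filter (fun B => ∃ h ∈ H, B = T.filter (fun z => h z = true)) with hA
  -- choice of hypotheses realizing each labeling of s
  have key : ∀ t : Finset (X × Bool), ∃ h ∈ H,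
      ∀ p ∈ s, decide (∃ z ∈ U p.1, h z ≠ p.2) = decide (p ∈ t) := by
    intro t
    obtain ⟨f, hf, hfb⟩ := hsh (fun p => decide (p ∈ t))
    obtain ⟨h, hh, hfh⟩ := hf
    exact ⟨h, hh, fun p hp => by rw [← hfh p]; exact hfb p hp⟩
  choose hfun hmem hspec using key
  -- injection from powerset of s into A
  have hinj : ∀ t ∈ s.powerset, ∀ t' ∈ s.powerset,
      T.filter (fun z => hfun t z = true) = T.filter (fun z => hfun t' z = true) → t = t' := by
    intro t ht t' ht' heq
    rw [Finset.mem_powerset] at ht ht'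
    have hTz : ∀ z ∈ T, hfun t z = hfun t' z := by
      intro z hzT
      have h1 : z ∈ T.filter (fun z => hfun t z = true) ↔
          z ∈ T.filter (fun z => hfun t' z = true) := by rw [heq]
      simp only [Finset.mem_filter, hzT, true_and] at h1
      exact Bool.eq_iff_iff.mpr h1
    have hmemiff : ∀ p ∈ s, (p ∈ t ↔ p ∈ t') := by
      intro p hps
      have h1 := hspec t p hps
      have h2 := hspec t' p hps
      have hsame : (∃ z ∈ U p.1, hfun t z ≠ p.2) ↔ (∃ z ∈ U p.1, hfun t' z ≠ p.2) := by
        constructor <;> rintro ⟨z, hz, hne⟩ <;> refine ⟨z, hz, ?_⟩ <;>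
          have hzz := hTz z (Finset.mem_biUnion.2 ⟨p, hps, hz⟩)
        · rwa [hzz] at hne
        · rwa [← hzz] at hne
      have hdd : decide (p ∈ t) = decide (p ∈ t') := by
        rw [← h1, ← h2]; exact decide_eq_decide.2 hsame
      exact decide_eq_decide.1 hdd
    ext p
    constructor
    · intro hp; exact (hmemiff p (ht hp)).1 hp
    · intro hp; exact (hmemiff p (ht' hp)).2 hp
  have hcard1 : 2 ^ m ≤ A.card := by
    have := Finset.card_le_card_of_injOn (f := fun t => T.filter (fun z => hfun t z = true))
      (s := s.powerset) (t := A)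
      (fun t ht => by
        rw [hA, Finset.mem_coe, Finset.mem_filter, Finset.mem_powerset]
        exact ⟨Finset.filter_subset _ _, hfun t, hmem t, rfl⟩)
      (fun t ht t' ht' h => hinj t ht t' ht' h)
    rwa [Finset.card_powerset] at this
  -- Sauer-Shelah: A.card ≤ (T.card + 1) ^ d
  have hvcA : ∀ B ∈ A.shatterer, B.card ≤ d := by
    intro B hB
    rw [Finset.mem_shatterer] at hB
    apply hvc
    intro b
    obtain ⟨C, hC, hBC⟩ := hB (t := B.filter (fun z => b z = true)) (Finset.filter_subset _ _)
    rw [hA, Finset.mem_filter] at hC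
    obtain ⟨hCpow, h, hh, hCeq⟩ := hC
    obtain ⟨C0, hC0A, hBC0⟩ := hB.exists_superset
    have hBT : B ⊆ T := by
      rw [hA, Finset.mem_filter, Finset.mem_powerset] at hC0A
      exact hBC0.trans hC0A.1
    refine ⟨h, hh, fun z hz => ?_⟩
    have hzT : z ∈ T := hBT hz
    have hiff : h z = true ↔ b z = true := by
      constructor
      · intro hhz
        have : z ∈ B ∩ C := Finset.mem_inter.2 ⟨hz, by rw [hCeq, Finset.mem_filter]; exact ⟨hzT, hhz⟩⟩
        rw [hBC, Finset.mem_filter] at this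
        exact this.2
      · intro hbz
        have : z ∈ B ∩ C := by rw [hBC, Finset.mem_filter]; exact ⟨hz, hbz⟩
        have := (Finset.mem_inter.1 this).2
        rw [hCeq, Finset.mem_filter] at this
        exact this.2
    cases hb : h z <;> cases hbz : b z <;> simp_all
  have hshsub : A.shatterer ⊆ T.powerset.filter (fun B => B.card ≤ d) := by
    intro B hB
    rw [Finset.mem_filter, Finset.mem_powerset]
    refine ⟨?_, hvcA B hB⟩
    obtain ⟨C0, hC0A, hBC0⟩ := (Finset.mem_shatterer.1 hB).exists_superset
    rw [hA, Finset.mem_filter, Finset.mem_powerset] at hC0A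
    exact hBC0.trans hC0A.1
  have hcard2 : A.card ≤ (T.card + 1) ^ d := by
    calc A.card ≤ A.shatterer.card := Finset.card_le_card_shatterer A
      _ ≤ (T.powerset.filter (fun B => B.card ≤ d)).card := Finset.card_le_card hshsub
      _ ≤ ((Finset.range (d + 1)).biUnion (fun i => T.powersetCard i)).card := by
          apply Finset.card_le_card
          intro B hB
          rw [Finset.mem_filter, Finset.mem_powerset] at hB
          exact Finset.mem_biUnion.2 ⟨B.card, Finset.mem_range.2 (Nat.lt_succ_of_le hB.2),
            (Finset.mem_powersetCard).2 ⟨hB.1, rfl⟩⟩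
      _ ≤ ∑ i ∈ Finset.range (d + 1), (T.powersetCard i).card := Finset.card_biUnion_le
      _ = ∑ i ∈ Finset.range (d + 1), T.card.choose i := by
          simp [Finset.card_powersetCard]
      _ ≤ (T.card + 1) ^ d := sum_choose_le_pow T.card d
  -- assemble in ℕ
  have hmk2 : 2 ≤ m * k := le_trans hk (Nat.le_mul_of_pos_left k hm1)
  have hnat : 2 ^ m ≤ (m * k) ^ (2 * d) := by
    calc 2 ^ m ≤ A.card := hcard1
      _ ≤ (T.card + 1) ^ d := hcard2
      _ ≤ (m * k + 1) ^ d := Nat.pow_le_pow_left (Nat.add_le_add_right hTcard 1) d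
      _ ≤ ((m * k) ^ 2) ^ d := Nat.pow_le_pow_left (by nlinarith) d
      _ = (m * k) ^ (2 * d) := by rw [← pow_mul]
  -- pass to reals
  have hreal : (2 : ℝ) ^ m ≤ ((m * k : ℕ) : ℝ) ^ (2 * d) := by
    exact_mod_cast hnat
  have hlogs : (m : ℝ) * Real.log 2 ≤ (2 * d : ℕ) * Real.log ((m * k : ℕ) : ℝ) := by
    have h1 : Real.log ((2 : ℝ) ^ m) ≤ Real.log (((m * k : ℕ) : ℝ) ^ (2 * d)) :=
      Real.log_le_log (by positivity) hreal
    rwa [Real.log_pow, Real.log_pow] at h1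
  have hL : 0 ≤ Real.log ((m : ℝ) * k) := by
    apply Real.log_nonneg
    have : (1 : ℝ) ≤ ((m * k : ℕ) : ℝ) := by
      exact_mod_cast Nat.one_le_iff_ne_zero.2 (by omega)
    push_cast at this
    linarith
  have hlog2 : (0.6931471803 : ℝ) < Real.log 2 := Real.log_two_gt_d9
  have hgoal : (m : ℝ) ≤ 3 * d * Real.log ((m : ℝ) * k) := by
    push_cast at hlogs
    have hdL : 0 ≤ (d : ℝ) * Real.log ((m : ℝ) * k) := mul_nonneg (Nat.cast_nonneg d) hL
    have hmm : (m : ℝ) * 0.6931471803 ≤ (m : ℝ) * Real.log 2 :=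
      mul_le_mul_of_nonneg_left hlog2.le (Nat.cast_nonneg m)
    nlinarith
  exact hgoal
end

section
/- Multiplicative Weights regret bound: for any sequence of cost vectors m_1,...,m_T ∈ [0,1]^n and parameter 0 < δ ≤ 1/2, the Multiplicative Weights algorithm with update w_{t+1}(i) = w_t(i)(1 − δ m_t(i)) and plays p_t(i) = w_t(i)/Σ_j w_t(j) (starting from uniform weights) satisfies Σ_{t=1}^T ⟨m_t, p_t⟩ ≤ (1+δ) min_{i ∈ [n]} Σ_{t=1}^T m_t(i) + (ln n)/δ. -/
open scoped Classical

lemma mw_aux_log (z : ℝ) (hz0 : 0 ≤ z) (hz : z ≤ 1/2) :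
    -z - z^2 ≤ Real.log (1 - z) := by
  have h1 : (0:ℝ) < 1 - z := by linarith
  rw [Real.le_log_iff_exp_le h1]
  have hq : 1 + (z + z^2) + (z + z^2)^2/2 ≤ Real.exp (z + z^2) :=
    Real.quadratic_le_exp_of_nonneg (by nlinarith)
  have hpos : 0 < Real.exp (z + z^2) := Real.exp_pos _
  have key : 1 ≤ (1 - z) * Real.exp (z + z^2) := by nlinarith
  have : Real.exp (-z - z^2) = 1 / Real.exp (z + z^2) := by
    rw [show -z - z^2 = -(z + z^2) by ring, Real.exp_neg, one_div]
  rw [this, div_le_iff₀ hpos]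
  linarith

/-- Multiplicative Weights regret bound. With costs `m_t(i) ∈ [0,1]`,
`0 < δ ≤ 1/2`, weights `w_{t+1}(i) = w_t(i)(1 − δ m_t(i))` started uniformly, and plays
`p_t(i) = w_t(i)/Σ_j w_t(j)`, we have
`Σ_t ⟨m_t, p_t⟩ ≤ (1+δ) min_i Σ_t m_t(i) + (ln n)/δ`. -/
theorem stmt5 (n T : ℕ) (hn : 0 < n) (δ : ℝ) (hδ0 : 0 < δ) (hδ : δ ≤ 1 / 2)
    (cost : Fin T → Fin n → ℝ) (hcost : ∀ t i, cost t i ∈ Set.Icc (0:ℝ) 1)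
    (w : Fin T → Fin n → ℝ)
    (hw : ∀ t i, w t i = ∏ s ∈ Finset.univ.filter (fun s => s < t), (1 - δ * cost s i))
    (p : Fin T → Fin n → ℝ)
    (hp : ∀ t i, p t i = w t i / ∑ j, w t j) :
    ∀ i0 : Fin n,
      ∑ t, ∑ i, p t i * cost t i ≤ (1 + δ) * ∑ t, cost t i0 + Real.log n / δ := by
  intro i0
  have hcost0 : ∀ t i, 0 ≤ cost t i := fun t i => (hcost t i).1
  have hcost1 : ∀ t i, cost t i ≤ 1 := fun t i => (hcost t i).2
  have ha : ∀ (t : Fin T) (i : Fin n), (1:ℝ)/2 ≤ 1 - δ * cost t i := by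
    intro t i; nlinarith [hcost0 t i, hcost1 t i]
  have hapos : ∀ (t : Fin T) (i : Fin n), (0:ℝ) < 1 - δ * cost t i := by
    intro t i; linarith [ha t i]
  set W : ℕ → Fin n → ℝ := fun k i =>
    ∏ s ∈ Finset.univ.filter (fun s : Fin T => s.val < k), (1 - δ * cost s i) with hWdef
  have hwW : ∀ (t : Fin T) (i : Fin n), w t i = W t.val i := by
    intro t i
    rw [hw]
    apply Finset.prod_congr _ (fun _ _ => rfl)
    apply Finset.filter_congr
    intro s _
    exact Iff.rfl
  have hWpos : ∀ k i, 0 < W k i := by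
    intro k i
    apply Finset.prod_pos
    intro s _
    exact hapos s i
  have hwpos : ∀ (t : Fin T) i, 0 < w t i := by
    intro t i; rw [hwW]; exact hWpos _ _
  have hS : ∀ t : Fin T, 0 < ∑ j, w t j :=
    fun t => Finset.sum_pos (fun j _ => hwpos t j) ⟨i0, Finset.mem_univ i0⟩
  set F : Fin T → ℝ := fun t => ∑ i, p t i * cost t i with hFdef
  have hwc : ∀ t : Fin T, ∑ i, w t i * cost t i = (∑ j, w t j) * F t := by
    intro t
    have hFt : F t = (∑ i, w t i * cost t i) / (∑ j, w t j) := by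
      simp only [hFdef]
      rw [Finset.sum_div]
      apply Finset.sum_congr rfl
      intro i _
      rw [hp]
      ring
    rw [hFt, mul_div_cancel₀ _ (ne_of_gt (hS t))]
  have hF0 : ∀ t, 0 ≤ F t := by
    intro t
    apply Finset.sum_nonneg
    intro i _
    have : 0 ≤ p t i := by rw [hp]; exact div_nonneg (hwpos t i).le (hS t).le
    exact mul_nonneg this (hcost0 t i)
  have hF1 : ∀ t, F t ≤ 1 := by
    intro t
    have h1 : ∑ i, w t i * cost t i ≤ ∑ j, w t j := by
      apply Finset.sum_le_sum
      intro i _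
      calc w t i * cost t i ≤ w t i * 1 :=
            mul_le_mul_of_nonneg_left (hcost1 t i) (hwpos t i).le
        _ = w t i := mul_one _
    have := hwc t
    nlinarith [hS t]
  have key : ∀ t : Fin T, ∑ i, w t i * (1 - δ * cost t i)
      = (∑ j, w t j) * (1 - δ * F t) := by
    intro t
    calc ∑ i, w t i * (1 - δ * cost t i)
        = ∑ i, (w t i - δ * (w t i * cost t i)) := by
          apply Finset.sum_congr rfl; intro i _; ring
      _ = (∑ i, w t i) - δ * ∑ i, w t i * cost t i := by
          rw [Finset.sum_sub_distrib, Finset.mul_sum]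
      _ = (∑ j, w t j) - δ * ((∑ j, w t j) * F t) := by rw [hwc t]
      _ = (∑ j, w t j) * (1 - δ * F t) := by ring
  -- the product-insert helper
  have hfilter : ∀ (k : ℕ) (hk : k < T) (q : Fin T → ℝ),
      ∏ s ∈ Finset.univ.filter (fun s : Fin T => s.val < k + 1), q s
      = q ⟨k, hk⟩ * ∏ s ∈ Finset.univ.filter (fun s : Fin T => s.val < k), q s := by
    intro k hk q
    have hins : Finset.univ.filter (fun s : Fin T => s.val < k + 1)
        = insert (⟨k, hk⟩ : Fin T) (Finset.univ.filter (fun s : Fin T => s.val < k)) := by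
      ext s
      simp only [Finset.mem_insert, Finset.mem_filter, Finset.mem_univ, true_and, Fin.ext_iff]
      omega
    rw [hins, Finset.prod_insert (by simp)]
  have chain : ∀ k, k ≤ T → ∑ i, W k i
      = n * ∏ t ∈ Finset.univ.filter (fun t : Fin T => t.val < k), (1 - δ * F t) := by
    intro k
    induction k with
    | zero =>
      intro _
      have hempty : Finset.univ.filter (fun s : Fin T => s.val < 0) = ∅ := by
        ext s; simp
      simp [hWdef, hempty]
    | succ k ih =>
      intro hk1
      have hk : k < T := hk1
      have h1 : ∀ i, W (k+1) i = (1 - δ * cost ⟨k, hk⟩ i) * W k i := by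
        intro i
        simpa [hWdef] using hfilter k hk (fun s => 1 - δ * cost s i)
      have h2 : ∀ i, W k i = w ⟨k, hk⟩ i := fun i => (hwW ⟨k, hk⟩ i).symm
      calc ∑ i, W (k+1) i = ∑ i, w ⟨k, hk⟩ i * (1 - δ * cost ⟨k, hk⟩ i) := by
            apply Finset.sum_congr rfl
            intro i _
            rw [h1, h2]; ring
        _ = (∑ j, w ⟨k, hk⟩ j) * (1 - δ * F ⟨k, hk⟩) := key ⟨k, hk⟩
        _ = (∑ j, W k j) * (1 - δ * F ⟨k, hk⟩) := by
            congr 1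
            exact Finset.sum_congr rfl (fun j _ => (h2 j).symm)
        _ = (n * ∏ t ∈ Finset.univ.filter (fun t : Fin T => t.val < k), (1 - δ * F t))
              * (1 - δ * F ⟨k, hk⟩) := by rw [ih (le_of_lt hk)]
        _ = n * ∏ t ∈ Finset.univ.filter (fun t : Fin T => t.val < k + 1), (1 - δ * F t) := by
            rw [hfilter k hk (fun t => 1 - δ * F t)]
            ring
  have huniv : Finset.univ.filter (fun s : Fin T => s.val < T) = (Finset.univ : Finset (Fin T)) := by
    ext s; simp [s.isLt]
  have hfullW : ∀ i, W T i = ∏ t, (1 - δ * cost t i) := by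
    intro i; simp only [hWdef]; rw [huniv]
  have hgpos : ∀ t : Fin T, 0 < 1 - δ * F t := by
    intro t
    have : δ * F t ≤ δ * 1 := mul_le_mul_of_nonneg_left (hF1 t) hδ0.le
    nlinarith
  have hmain : ∏ t, (1 - δ * cost t i0) ≤ n * ∏ t, (1 - δ * F t) := by
    calc ∏ t, (1 - δ * cost t i0) = W T i0 := (hfullW i0).symm
      _ ≤ ∑ i, W T i :=
          Finset.single_le_sum (fun i _ => (hWpos T i).le) (Finset.mem_univ i0)
      _ = n * ∏ t ∈ Finset.univ.filter (fun t : Fin T => t.val < T), (1 - δ * F t) :=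
          chain T le_rfl
      _ = n * ∏ t, (1 - δ * F t) := by rw [huniv]
  have hLpos : 0 < ∏ t, (1 - δ * cost t i0) :=
    Finset.prod_pos (fun t _ => hapos t i0)
  have hRprodpos : 0 < ∏ t, (1 - δ * F t) := Finset.prod_pos (fun t _ => hgpos t)
  have hnpos : (0:ℝ) < n := by exact_mod_cast hn
  have hlog := Real.log_le_log hLpos hmain
  rw [Real.log_prod (fun t _ => (hapos t i0).ne'),
      Real.log_mul hnpos.ne' hRprodpos.ne',
      Real.log_prod (fun t _ => (hgpos t).ne')] at hlog
  have hupper : ∑ t, Real.log (1 - δ * F t) ≤ ∑ t, (-(δ * F t)) := by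
    apply Finset.sum_le_sum
    intro t _
    have := Real.log_le_sub_one_of_pos (hgpos t)
    linarith
  have hlower : ∑ t, (-(δ + δ^2) * cost t i0) ≤ ∑ t, Real.log (1 - δ * cost t i0) := by
    apply Finset.sum_le_sum
    intro t _
    have hz0 : 0 ≤ δ * cost t i0 := mul_nonneg hδ0.le (hcost0 t i0)
    have hz : δ * cost t i0 ≤ 1/2 := by nlinarith [hcost1 t i0, hcost0 t i0]
    have h := mw_aux_log (δ * cost t i0) hz0 hz
    have hc2 : cost t i0 ^ 2 ≤ cost t i0 := by nlinarith [hcost0 t i0, hcost1 t i0]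
    have hsq : (δ * cost t i0)^2 ≤ δ^2 * cost t i0 := by
      have h5 := mul_le_mul_of_nonneg_left hc2 (sq_nonneg δ)
      nlinarith [h5]
    nlinarith
  have hsum1 : ∑ t, (-(δ + δ^2) * cost t i0) = -(δ + δ^2) * ∑ t, cost t i0 := by
    rw [Finset.mul_sum]
  have hsum2 : ∑ t, (-(δ * F t)) = -(δ * ∑ t, F t) := by
    rw [Finset.mul_sum]
    exact Finset.sum_neg_distrib (fun t => δ * F t)
  have hcomb : δ * ∑ t, F t ≤ Real.log n + (δ + δ^2) * ∑ t, cost t i0 := by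
    have := le_trans hlower hlog
    rw [hsum1] at this
    have h2 := hupper
    rw [hsum2] at h2
    linarith
  have hgoal : ∑ t, F t ≤ (1 + δ) * ∑ t, cost t i0 + Real.log n / δ := by
    have hd : Real.log n / δ * δ = Real.log n := div_mul_cancel₀ _ hδ0.ne'
    nlinarith [hcomb]
  simpa [hFdef] using hgoal
end

section
/- Convex hull VC bound (Blumer et al.): if H is a class of binary classifiers with VC dimension d, then the class of majority votes of T functions from H, H^T = {MAJ(h_1,...,h_T) : h_i ∈ H}, has VC dimension at most O(d T log T). -/
open scoped Classical

/-- Majority vote of `T` binary classifiers: outputs `1` iff strictly more than half vote `1`. -/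
def MAJ {X : Type*} {T : ℕ} (hs : Fin T → X → Bool) (x : X) : Bool :=
  decide (T < 2 * (Finset.univ.filter (fun t => hs t x = true)).card)

section Aux

open Finset

lemma sum_choose_le_pow_s8 (m d : ℕ) (hd : 1 ≤ d) (hdm : d ≤ m) :
    (∑ k ∈ Iic d, (m.choose k : ℝ)) ≤ (Real.exp 1 * m / d) ^ d := by
  have hm : 0 < m := lt_of_lt_of_le hd hdm
  set x : ℝ := d / m with hxdef
  have hx0 : 0 < x := div_pos (by positivity) (by positivity)
  have hx1 : x ≤ 1 := by
    rw [div_le_one (by positivity)]; exact_mod_cast hdm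
  have h1 : x ^ d * ∑ k ∈ Iic d, (m.choose k : ℝ) ≤ ∑ k ∈ Iic d, (m.choose k : ℝ) * x ^ k := by
    rw [Finset.mul_sum]
    refine Finset.sum_le_sum fun k hk => ?_
    rw [mul_comm]
    exact mul_le_mul_of_nonneg_left (pow_le_pow_of_le_one hx0.le hx1 (mem_Iic.1 hk)) (by positivity)
  have h2 : ∑ k ∈ Iic d, (m.choose k : ℝ) * x ^ k ≤ ∑ k ∈ range (m+1), (m.choose k : ℝ) * x ^ k := by
    refine Finset.sum_le_sum_of_subset_of_nonneg ?_ (fun k _ _ => by positivity)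
    intro k hk
    simp only [mem_Iic, mem_range] at *
    omega
  have h3 : ∑ k ∈ range (m+1), (m.choose k : ℝ) * x ^ k = (1 + x) ^ m := by
    rw [add_comm 1 x, add_pow x 1 m]
    refine Finset.sum_congr rfl fun k hk => by rw [one_pow]; ring
  have h4 : (1 + x) ^ m ≤ Real.exp d := by
    calc (1 + x) ^ m ≤ (Real.exp x) ^ m := by
          refine pow_le_pow_left₀ (by positivity) ?_ m
          linarith [Real.add_one_le_exp x]
      _ = Real.exp (x * m) := by rw [← Real.exp_nat_mul]; ring_nf
      _ = Real.exp d := by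
          congr 1
          rw [hxdef, div_mul_cancel₀]
          exact Nat.cast_ne_zero.2 hm.ne' 
  have key : x ^ d * ∑ k ∈ Iic d, (m.choose k : ℝ) ≤ Real.exp d := by
    calc _ ≤ _ := h1
      _ ≤ _ := h2
      _ = _ := h3
      _ ≤ _ := h4
  have hxd : (0:ℝ) < x ^ d := by positivity
  rw [← le_div_iff₀' hxd] at key
  refine key.trans (le_of_eq ?_)
  have he : Real.exp (d:ℝ) = Real.exp 1 ^ d := by
    rw [← Real.exp_nat_mul, mul_one]
  rw [hxdef, div_pow, he, div_pow, mul_pow]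
  have hd0 : ((d:ℝ)) ^ d ≠ 0 := by positivity
  have hm0 : ((m:ℝ)) ^ d ≠ 0 := by positivity
  field_simp


lemma arith_main (m d T : ℕ) (hT : 2 ≤ T)
    (h : (2:ℝ) ^ m ≤ (∑ k ∈ Iic d, (m.choose k : ℝ)) ^ T) :
    (m : ℝ) ≤ 10 * d * T * Real.log T := by
  have hT0 : (0:ℝ) < T := by positivity
  have hlog2 : (0.6931:ℝ) < Real.log 2 := by
    have := Real.log_two_gt_d9; linarith
  have hL2 : Real.log 2 ≤ Real.log T := by
    apply Real.log_le_log (by norm_num); exact_mod_cast hT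
  have hL0 : (0:ℝ) < Real.log T := by linarith
  rcases Nat.eq_zero_or_pos d with hd0 | hd1
  · subst hd0
    have hsum : (∑ k ∈ Iic 0, (m.choose k : ℝ)) = 1 := by
      rw [show (Iic 0 : Finset ℕ) = {0} by ext k; simp [Nat.le_zero], Finset.sum_singleton]
      simp
    rw [hsum, one_pow] at h
    have hm0 : m = 0 := by
      by_contra hm
      have h1 : (1:ℝ) < 2 ^ m := one_lt_pow₀ (by norm_num) hm
      linarith
    subst hm0; norm_num
  rcases le_or_gt (m:ℝ) ((d:ℝ) * T) with hm | hm
  · have hd0 : (1:ℝ) ≤ d := by exact_mod_cast hd1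
    nlinarith [mul_pos (mul_pos (show (0:ℝ) < d by linarith) hT0) hL0]
  · -- main case : m > d*T
    have hd0 : (0:ℝ) < d := by exact_mod_cast hd1
    have hdT : (0:ℝ) < (d:ℝ) * T := by positivity
    have hm0 : (0:ℝ) < m := lt_trans hdT hm
    have hT2 : (2:ℝ) ≤ T := by exact_mod_cast hT
    have hdm : d ≤ m := by
      have h0 : (0:ℝ) ≤ (d:ℝ) * ((T:ℝ) - 1) := mul_nonneg hd0.le (by linarith)
      have : (d:ℝ) ≤ (d:ℝ) * T := by nlinarith
      have := this.trans hm.le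
      exact_mod_cast this
    have hS := sum_choose_le_pow_s8 m d hd1 hdm
    have hSnn : (0:ℝ) ≤ ∑ k ∈ Iic d, (m.choose k : ℝ) := by positivity
    have hbase : (0:ℝ) < Real.exp 1 * m / d := by positivity
    have h2 : (2:ℝ) ^ m ≤ ((Real.exp 1 * m / d) ^ d) ^ T :=
      h.trans (by exact pow_le_pow_left₀ hSnn hS T)
    rw [← pow_mul] at h2
    -- take logs
    have hlog : (m:ℝ) * Real.log 2 ≤ (d * T : ℝ) * Real.log (Real.exp 1 * m / d) := by
      have := Real.log_le_log (by positivity) h2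
      rw [Real.log_pow, Real.log_pow] at this
      push_cast at this ⊢
      convert this using 2
    set r : ℝ := (m:ℝ) / ((d:ℝ)*T) with hrdef
    have hr1 : 1 < r := (one_lt_div hdT).2 hm
    have hr0 : 0 < r := by linarith
    have hmr : (m:ℝ) = r * ((d:ℝ)*T) := by rw [hrdef]; field_simp
    have hexpand : Real.log (Real.exp 1 * m / d) = 1 + Real.log r + Real.log T := by
      have hmd : (m:ℝ)/d = r * T := by rw [hrdef]; field_simp
      rw [mul_div_assoc, Real.log_mul (Real.exp_ne_zero 1) (by positivity), Real.log_exp,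
        hmd, Real.log_mul (by positivity) (by positivity)]
      ring
    rw [hexpand, hmr] at hlog
    have hkey : r * Real.log 2 ≤ 1 + Real.log r + Real.log ↑T := by
      have h' : (r * Real.log 2) * ((d:ℝ)*T) ≤ (1 + Real.log r + Real.log ↑T) * ((d:ℝ)*T) := by
        calc (r * Real.log 2) * ((d:ℝ)*T) = r * ((d:ℝ)*T) * Real.log 2 := by ring
          _ ≤ (d:ℝ) * ↑T * (1 + Real.log r + Real.log ↑T) := hlog
          _ = _ := by ring
      exact (mul_le_mul_iff_of_pos_right hdT).1 h' 
    have hlr : Real.log r ≤ r / Real.exp 1 := by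
      have h1 : Real.log (r / Real.exp 1) ≤ r / Real.exp 1 - 1 :=
        Real.log_le_sub_one_of_pos (by positivity)
      rw [Real.log_div (by linarith) (Real.exp_ne_zero 1), Real.log_exp] at h1
      linarith
    have he1 : (2.718:ℝ) < Real.exp 1 := by
      have := Real.exp_one_gt_d9; linarith
    have hre : r / Real.exp 1 ≤ r * 0.368 := by
      rw [div_le_iff₀ (by positivity)]
      nlinarith
    have h5 : Real.log r ≤ r * 0.368 := hlr.trans hre
    have hrle : r ≤ 10 * Real.log ↑T := by
      nlinarith [mul_le_mul_of_nonneg_left hlog2.le hr0.le]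
    rw [hmr]
    calc r * ((d:ℝ)*T) ≤ 10 * Real.log ↑T * ((d:ℝ)*T) :=
          mul_le_mul_of_nonneg_right hrle hdT.le
      _ = 10 * d * T * Real.log ↑T := by ring

-- trace counting bound via Sauer-Shelah
lemma trace_card_le {X : Type} (H : Set (X → Bool)) (d : ℕ)
    (hvc : ∀ s : Finset X, Shatters H s → s.card ≤ d) (s : Finset X) :
    ((Set.toFinite ((fun f (z : ↥s) => f z.1) '' H)).toFinset).card
      ≤ ∑ k ∈ Iic d, (s.card).choose k := by
  classical
  set tr : (X → Bool) → (↥s → Bool) := fun f z => f z.1 with htr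
  set TrH : Finset (↥s → Bool) := (Set.toFinite (tr '' H)).toFinset with hTrH
  set A : Finset (Finset ↥s) := TrH.image (fun g => Finset.univ.filter (fun z => g z = true))
    with hA
  have hinj : Set.InjOn (fun g : ↥s → Bool => Finset.univ.filter (fun z => g z = true)) TrH := by
    intro g hg g' hg' hgg'
    funext z
    have h := Finset.ext_iff.1 hgg' z
    simp only [Finset.mem_filter, Finset.mem_univ, true_and] at h
    rw [Bool.eq_iff_iff]
    exact h
  have hcard : TrH.card = A.card := (Finset.card_image_of_injOn hinj).symm
  have hvcA : A.vcDim ≤ d := by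
    refine Finset.sup_le fun t ht => ?_
    rw [Finset.mem_shatterer] at ht
    have hsh : Shatters H (t.image (fun z : ↥s => (z : X))) := by
      intro b
      obtain ⟨u, huA, huv⟩ := ht (Finset.filter_subset (fun z : ↥s => b (z : X) = true) t)
      obtain ⟨g, hgTr, hgu⟩ := Finset.mem_image.1 huA
      rw [hTrH, Set.Finite.mem_toFinset] at hgTr
      obtain ⟨f, hfH, hfg⟩ := hgTr
      refine ⟨f, hfH, ?_⟩
      intro x hx
      obtain ⟨z, hzt, rfl⟩ := Finset.mem_image.1 hx
      have h1 : f (z : X) = g z := by rw [← hfg]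
      have h2 : g z = true ↔ z ∈ u := by
        rw [← hgu]; simp
      have h3 : z ∈ u ↔ b (z : X) = true := by
        constructor
        · intro hzu
          have : z ∈ t ∩ u := Finset.mem_inter.2 ⟨hzt, hzu⟩
          rw [huv] at this
          exact (Finset.mem_filter.1 this).2
        · intro hb
          have : z ∈ t ∩ u := by
            rw [huv]; exact Finset.mem_filter.2 ⟨hzt, hb⟩
          exact (Finset.mem_inter.1 this).2
      rw [h1, Bool.eq_iff_iff, h2, h3]
    have hle := hvc _ hsh
    rwa [Finset.card_image_of_injective _ Subtype.coe_injective] at hle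
  calc TrH.card = A.card := hcard
    _ ≤ A.shatterer.card := Finset.card_le_card_shatterer A
    _ ≤ ∑ k ∈ Iic A.vcDim, (Fintype.card ↥s).choose k := Finset.card_shatterer_le_sum_vcDim
    _ ≤ ∑ k ∈ Iic d, (Fintype.card ↥s).choose k :=
        Finset.sum_le_sum_of_subset (Finset.Iic_subset_Iic.2 hvcA)
    _ = ∑ k ∈ Iic d, (s.card).choose k := by rw [Fintype.card_coe]

-- Step B : traces of majority class bounded by traces of H to the T
lemma trace_maj_le {X : Type} (H : Set (X → Bool)) (T : ℕ) (s : Finset X) :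
    ((Set.toFinite ((fun f (z : ↥s) => f z.1) ''
        {f : X → Bool | ∃ hs : Fin T → X → Bool, (∀ t, hs t ∈ H) ∧ ∀ x, f x = MAJ hs x})).toFinset).card
      ≤ ((Set.toFinite ((fun f (z : ↥s) => f z.1) '' H)).toFinset).card ^ T := by
  classical
  set tr : (X → Bool) → (↥s → Bool) := fun f z => f z.1 with htr
  set TrH : Finset (↥s → Bool) := (Set.toFinite (tr '' H)).toFinset with hTrH
  set F : Set (X → Bool) :=
    {f : X → Bool | ∃ hs : Fin T → X → Bool, (∀ t, hs t ∈ H) ∧ ∀ x, f x = MAJ hs x} with hF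
  set TrF : Finset (↥s → Bool) := (Set.toFinite (tr '' F)).toFinset with hTrF
  set comb : (Fin T → (↥s → Bool)) → (↥s → Bool) :=
    fun p z => decide (T < 2 * (Finset.univ.filter (fun t => p t z = true)).card) with hcomb
  have hsub : TrF ⊆ (Fintype.piFinset (fun _ : Fin T => TrH)).image comb := by
    intro g hg
    rw [hTrF, Set.Finite.mem_toFinset] at hg
    obtain ⟨f, hfF, rfl⟩ := hg
    obtain ⟨hs, hhs, hfx⟩ := hfF
    refine Finset.mem_image.2 ⟨fun t => tr (hs t), ?_, ?_⟩
    · rw [Fintype.mem_piFinset]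
      intro t
      rw [hTrH, Set.Finite.mem_toFinset]
      exact ⟨hs t, hhs t, rfl⟩
    · funext z
      show decide (T < 2 * (Finset.univ.filter (fun t => hs t z.1 = true)).card) = tr f z
      rw [htr]
      show _ = f z.1
      rw [hfx z.1]
      rfl
  calc TrF.card ≤ ((Fintype.piFinset (fun _ : Fin T => TrH)).image comb).card :=
        Finset.card_le_card hsub
    _ ≤ (Fintype.piFinset (fun _ : Fin T => TrH)).card := Finset.card_image_le
    _ = TrH.card ^ T := Fintype.card_piFinset_const _ _

-- Step C : shattering forces all traces
lemma pow_le_trace {X : Type} (F : Set (X → Bool)) (s : Finset X) (hshat : Shatters F s) :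
    2 ^ s.card ≤ ((Set.toFinite ((fun f (z : ↥s) => f z.1) '' F)).toFinset).card := by
  classical
  set tr : (X → Bool) → (↥s → Bool) := fun f z => f z.1 with htr
  set TrF : Finset (↥s → Bool) := (Set.toFinite (tr '' F)).toFinset with hTrF
  have huniv : (Finset.univ : Finset (↥s → Bool)) ⊆ TrF := by
    intro b' _
    rw [hTrF, Set.Finite.mem_toFinset]
    obtain ⟨f, hf, hfb⟩ := hshat (fun x => if h : x ∈ s then b' ⟨x, h⟩ else false)
    refine ⟨f, hf, ?_⟩
    funext z
    have := hfb z.1 z.2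
    rw [htr]
    show f z.1 = b' z
    rw [this, dif_pos z.2]
  calc 2 ^ s.card = Fintype.card (↥s → Bool) := by
        rw [Fintype.card_fun, Fintype.card_coe, Fintype.card_bool]
    _ = (Finset.univ : Finset (↥s → Bool)).card := (Finset.card_univ).symm
    _ ≤ TrF.card := Finset.card_le_card huniv

end Aux

/-- Convex hull / majority-vote VC bound (Blumer et al.): if `H` has VC
dimension at most `d`, the class of majority votes of `T ≥ 2` functions from `H` has VC
dimension `O(d T log T)`. -/
theorem stmt8 : ∃ C : ℝ, 0 < C ∧
    ∀ {X : Type} (H : Set (X → Bool)) (d T : ℕ), 2 ≤ T →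
      (∀ s : Finset X, Shatters H s → s.card ≤ d) →
      ∀ s : Finset X,
        Shatters {f : X → Bool |
            ∃ hs : Fin T → X → Bool, (∀ t, hs t ∈ H) ∧ ∀ x, f x = MAJ hs x} s →
        (s.card : ℝ) ≤ C * d * T * Real.log T := by
  refine ⟨10, by norm_num, ?_⟩
  intro X H d T hT hvc s hshat
  have h1 := pow_le_trace _ s hshat
  have h2 := trace_maj_le H T s
  have h3 := trace_card_le H d hvc s
  have hnat : 2 ^ s.card ≤ (∑ k ∈ Finset.Iic d, (s.card).choose k) ^ T :=
    h1.trans (h2.trans (Nat.pow_le_pow_left h3 T))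
  have hreal : (2:ℝ) ^ s.card ≤ (∑ k ∈ Finset.Iic d, ((s.card).choose k : ℝ)) ^ T := by
    have := (Nat.cast_le (α := ℝ)).2 hnat
    push_cast at this
    exact this
  exact arith_main s.card d T hT hreal
end

section
/- Weighted no-regret to minimax guarantee (extension of Feige–Mansour–Schapire to general weights): the core inequality L*(1−η) − (ln k)/η ≤ L^{ON}_T holds, where for a dataset S = {(x_i,y_i)}_{i=1}^m with weights p_i > 0 summing to 1 and perturbation sets of size at most k, the per-perturbation weights are updated multiplicatively by factor (1+η) upon mistakes, L^{ON}_T = Σ_{t=1}^T Σ_{i=1}^m Σ_{z ∈ U(x_i)} p_i P^t(z,(x_i,y_i)) 1[h_t(z) ≠ y_i] is the algorithm's loss, and L* = max_P Σ_{t=1}^T Σ_i Σ_z p_i P(z,(x_i,y_i)) 1[h_t(z) ≠ y_i] is the best fixed per-example distribution's loss. Concretely: define w_1(z,i)=1, w_{t+1}(z,i) = (1+η 1[h_t(z)≠y_i]) w_t(z,i), P^t(z,i) = w_t(z,i)/Σ_{z'} w_t(z',i). Then for any η > 0, L* (1−η) − (ln k)/η ≤ L^{ON}_T. -/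
open scoped Classical

lemma mwAux {X : Type*} (T k : ℕ) (hk : 2 ≤ k) (U : Finset X) (hUne : U.Nonempty)
    (hUk : U.card ≤ k) (η : ℝ) (hη : 0 < η)
    (c : Fin T → X → ℝ) (hc : ∀ t z, c t z = 0 ∨ c t z = 1) :
    (U.sup' hUne (fun z => ∑ t, c t z)) * (1 - η) - Real.log k / η
      ≤ ∑ t, ∑ z ∈ U, ((∏ s ∈ Finset.univ.filter (fun s => s < t), (1 + η * c s z)) /
          (∑ z' ∈ U, ∏ s ∈ Finset.univ.filter (fun s => s < t), (1 + η * c s z'))) * c t z := by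
  set cN : ℕ → X → ℝ := fun n z => if h : n < T then c ⟨n, h⟩ z else 0 with hcNdef
  have hcN : ∀ n z, cN n z = 0 ∨ cN n z = 1 := by
    intro n z; by_cases h : n < T
    · simp only [cN, dif_pos h]; exact hc _ _
    · simp [cN, h]
  have hcN0 : ∀ n z, 0 ≤ cN n z := by
    intro n z; rcases hcN n z with h | h <;> simp [h]
  set wv : ℕ → X → ℝ := fun n z => ∏ s ∈ Finset.range n, (1 + η * cN s z) with hwvdef
  set W : ℕ → ℝ := fun n => ∑ z ∈ U, wv n z with hWdef
  set F : ℕ → ℝ := fun n => ∑ z ∈ U, (wv n z / W n) * cN n z with hFdef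
  have hterm : ∀ n z, (1:ℝ) ≤ 1 + η * cN n z := by
    intro n z; nlinarith [hcN0 n z]
  have hwpos : ∀ n z, 0 < wv n z := by
    intro n z
    exact Finset.prod_pos fun s _ => lt_of_lt_of_le one_pos (hterm s z)
  have hWpos : ∀ n, 0 < W n := fun n => Finset.sum_pos (fun z _ => hwpos n z) hUne
  have hF0 : ∀ n, 0 ≤ F n := by
    intro n
    exact Finset.sum_nonneg fun z _ =>
      mul_nonneg (div_nonneg (hwpos n z).le (hWpos n).le) (hcN0 n z)
  have step : ∀ n, W (n + 1) = W n * (1 + η * F n) := by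
    intro n
    have h1 : W n * F n = ∑ z ∈ U, wv n z * cN n z := by
      rw [hFdef, Finset.mul_sum]
      refine Finset.sum_congr rfl fun z _ => ?_
      rw [div_mul_eq_mul_div, mul_div_assoc']
      exact mul_div_cancel_left₀ _ (hWpos n).ne'
    calc W (n + 1) = ∑ z ∈ U, wv n z * (1 + η * cN n z) := by
          simp [hWdef, hwvdef, Finset.prod_range_succ]
      _ = ∑ z ∈ U, (wv n z + η * (wv n z * cN n z)) := by
          refine Finset.sum_congr rfl fun z _ => ?_; ring
      _ = W n + η * ∑ z ∈ U, wv n z * cN n z := by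
          rw [Finset.sum_add_distrib, ← Finset.mul_sum]
      _ = W n * (1 + η * F n) := by rw [← h1]; ring
  have logstep : ∀ n, Real.log (W (n + 1)) ≤ Real.log (W n) + η * F n := by
    intro n
    have hpos : 0 < 1 + η * F n := by nlinarith [hF0 n]
    rw [step n, Real.log_mul (hWpos n).ne' hpos.ne']
    have := Real.log_le_sub_one_of_pos hpos
    linarith
  have telescope : Real.log (W T) ≤ Real.log (W 0) + ∑ n ∈ Finset.range T, η * F n := by
    have h1 : Real.log (W T) - Real.log (W 0)
        = ∑ n ∈ Finset.range T, (Real.log (W (n + 1)) - Real.log (W n)) :=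
      (Finset.sum_range_sub (fun n => Real.log (W n)) T).symm
    have h2 : ∑ n ∈ Finset.range T, (Real.log (W (n + 1)) - Real.log (W n))
        ≤ ∑ n ∈ Finset.range T, η * F n :=
      Finset.sum_le_sum fun n _ => by linarith [logstep n]
    linarith
  have hW0 : Real.log (W 0) ≤ Real.log k := by
    have hW0eq : W 0 = (U.card : ℝ) := by simp [hWdef, hwvdef]
    rw [hW0eq]
    have h1 : (0:ℝ) < U.card := by
      exact_mod_cast Finset.card_pos.mpr hUne
    exact Real.log_le_log h1 (by exact_mod_cast hUk)
  obtain ⟨z₀, hz₀mem, hz₀⟩ := Finset.exists_mem_eq_sup' hUne (fun z => ∑ t, c t z)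
  set M : ℝ := U.sup' hUne (fun z => ∑ t, c t z) with hMdef
  have hcc : ∀ t : Fin T, cN t.val z₀ = c t z₀ := by
    intro t; simp [cN, t.isLt]
  have hM0 : 0 ≤ M := by
    rw [hz₀]
    exact Finset.sum_nonneg fun t _ => by
      rcases hc t z₀ with h | h <;> simp [h]
  have hlogwT : Real.log (wv T z₀) = M * Real.log (1 + η) := by
    rw [hwvdef]
    rw [Real.log_prod fun s _ => (lt_of_lt_of_le one_pos (hterm s z₀)).ne']
    have heach : ∀ n, Real.log (1 + η * cN n z₀) = cN n z₀ * Real.log (1 + η) := by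
      intro n; rcases hcN n z₀ with h | h <;> simp [h]
    simp only [heach]
    rw [← Finset.sum_mul]
    congr 1
    rw [hz₀, ← Fin.sum_univ_eq_sum_range (fun n => cN n z₀) T]
    exact (Finset.sum_congr rfl fun t _ => hcc t)
  have hwTle : Real.log (wv T z₀) ≤ Real.log (W T) :=
    Real.log_le_log (hwpos T z₀) (Finset.single_le_sum (fun z _ => (hwpos T z).le) hz₀mem)
  have hlog : η - η * η ≤ Real.log (1 + η) := by
    have hp1 : (0:ℝ) < 1 + η := by linarith
    have h1 := Real.log_le_sub_one_of_pos (show (0:ℝ) < 1 / (1 + η) by positivity)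
    rw [Real.log_div one_ne_zero hp1.ne', Real.log_one] at h1
    have h2 : η - η * η ≤ η / (1 + η) := by
      rw [le_div_iff₀ hp1]; nlinarith
    have h3 : 1 - 1 / (1 + η) = η / (1 + η) := by field_simp; ring
    linarith
  -- now express the sum in the goal
  have hwv : ∀ (t : Fin T) z, (∏ s ∈ Finset.univ.filter (fun s => s < t), (1 + η * c s z))
      = wv t.val z := by
    intro t z
    rw [hwvdef]
    refine Finset.prod_bij (fun (s : Fin T) _ => s.val) ?_ ?_ ?_ ?_
    · intro s hsm
      simp only [Finset.mem_filter, Finset.mem_univ, true_and] at hsm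
      simpa [Finset.mem_range] using hsm
    · intro a _ b _ hab; exact Fin.val_injective hab
    · intro n hn
      simp only [Finset.mem_range] at hn
      refine ⟨⟨n, hn.trans t.isLt⟩, Finset.mem_filter.mpr ⟨Finset.mem_univ _, ?_⟩, rfl⟩
      exact hn
    · intro s _
      have : cN s.val z = c s z := by simp [cN, s.isLt]
      rw [this]
  have hsum : ∑ n ∈ Finset.range T, η * F n
      = η * ∑ t, ∑ z ∈ U, ((∏ s ∈ Finset.univ.filter (fun s => s < t), (1 + η * c s z)) /
          (∑ z' ∈ U, ∏ s ∈ Finset.univ.filter (fun s => s < t), (1 + η * c s z'))) * c t z := by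
    rw [Finset.mul_sum, ← Fin.sum_univ_eq_sum_range (fun n => η * F n) T]
    refine Finset.sum_congr rfl fun t _ => ?_
    congr 1
    rw [hFdef]
    refine Finset.sum_congr rfl fun z _ => ?_
    rw [hwv t z]
    congr 2
    · rw [hWdef]
      exact Finset.sum_congr rfl fun z' _ => (hwv t z').symm
    · simp [cN, t.isLt]
  have key : M * (η - η * η) ≤ Real.log k + η * ∑ t, ∑ z ∈ U,
      ((∏ s ∈ Finset.univ.filter (fun s => s < t), (1 + η * c s z)) /
          (∑ z' ∈ U, ∏ s ∈ Finset.univ.filter (fun s => s < t), (1 + η * c s z'))) * c t z := by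
    have h1 : M * (η - η * η) ≤ M * Real.log (1 + η) :=
      mul_le_mul_of_nonneg_left hlog hM0
    rw [← hsum]
    calc M * (η - η * η) ≤ M * Real.log (1 + η) := h1
      _ = Real.log (wv T z₀) := hlogwT.symm
      _ ≤ Real.log (W T) := hwTle
      _ ≤ Real.log (W 0) + ∑ n ∈ Finset.range T, η * F n := telescope
      _ ≤ Real.log k + ∑ n ∈ Finset.range T, η * F n := by linarith [hW0]
  set R : ℝ := ∑ t, ∑ z ∈ U, ((∏ s ∈ Finset.univ.filter (fun s => s < t), (1 + η * c s z)) /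
          (∑ z' ∈ U, ∏ s ∈ Finset.univ.filter (fun s => s < t), (1 + η * c s z'))) * c t z
  have hdiv : Real.log k / η * η = Real.log k := div_mul_cancel₀ _ hη.ne'
  nlinarith [key, hdiv, hη]

/-- Weighted extension of the Feige–Mansour–Schapire core inequality.
With per-example weights `p_i > 0` summing to 1, perturbation sets of size at most `k`,
multiplicative weight update `w_{t+1}(z,i) = (1 + η·1[h_t(z)≠y_i]) w_t(z,i)` (from `w_1 ≡ 1`)
and `P^t(z,i) = w_t(z,i)/Σ_{z'} w_t(z',i)`, the online loss `L^{ON}_T` and the benchmark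
`L* = Σ_i p_i max_{z∈U(x_i)} Σ_t 1[h_t(z)≠y_i]` satisfy `L*(1−η) − (ln k)/η ≤ L^{ON}_T`. -/
theorem stmt10 {X Y : Type*} (m T k : ℕ) (hm : 0 < m) (hk : 2 ≤ k)
    (S : Fin m → X × Y) (p : Fin m → ℝ) (hp : ∀ i, 0 < p i) (hp1 : ∑ i, p i = 1)
    (U : X → Finset X) (hUne : ∀ x, (U x).Nonempty) (hUk : ∀ x, (U x).card ≤ k)
    (hs : Fin T → X → Y) (η : ℝ) (hη : 0 < η)
    (w : Fin T → X → Fin m → ℝ)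
    (hw : ∀ t z i, w t z i = ∏ s ∈ Finset.univ.filter (fun s => s < t),
        (1 + η * (if hs s z ≠ (S i).2 then (1:ℝ) else 0)))
    (P : Fin T → X → Fin m → ℝ)
    (hP : ∀ t z i, P t z i = w t z i / ∑ z' ∈ U (S i).1, w t z' i) :
    (∑ i, p i * (U (S i).1).sup'
          (hUne (S i).1) (fun z => ∑ t, (if hs t z ≠ (S i).2 then (1:ℝ) else 0)))
        * (1 - η) - Real.log k / η
      ≤ ∑ t, ∑ i, ∑ z ∈ U (S i).1,
          p i * P t z i * (if hs t z ≠ (S i).2 then (1:ℝ) else 0) := by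

  have key : ∀ i : Fin m,
      ((U (S i).1).sup' (hUne (S i).1)
          (fun z => ∑ t, (if hs t z ≠ (S i).2 then (1:ℝ) else 0))) * (1 - η)
        - Real.log k / η
      ≤ ∑ t, ∑ z ∈ U (S i).1, P t z i * (if hs t z ≠ (S i).2 then (1:ℝ) else 0) := by
    intro i
    have h := mwAux T k hk (U (S i).1) (hUne (S i).1) (hUk (S i).1) η hη
      (fun t z => if hs t z ≠ (S i).2 then (1:ℝ) else 0)
      (fun t z => by by_cases h : hs t z ≠ (S i).2 <;> simp [h])
    refine h.trans_eq ?_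
    refine Finset.sum_congr rfl fun t _ => Finset.sum_congr rfl fun z hz => ?_
    rw [hP, hw]
    congr 2
    exact Finset.sum_congr rfl fun z' _ => by rw [hw]
  have hswap : ∑ t, ∑ i, ∑ z ∈ U (S i).1,
        p i * P t z i * (if hs t z ≠ (S i).2 then (1:ℝ) else 0)
      = ∑ i, p i * ∑ t, ∑ z ∈ U (S i).1,
          P t z i * (if hs t z ≠ (S i).2 then (1:ℝ) else 0) := by
    rw [Finset.sum_comm]
    refine Finset.sum_congr rfl fun i _ => ?_
    rw [Finset.mul_sum]
    refine Finset.sum_congr rfl fun t _ => ?_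
    rw [Finset.mul_sum]
    exact Finset.sum_congr rfl fun z _ => by ring
  rw [hswap]
  have hLHS : (∑ i, p i * (U (S i).1).sup'
          (hUne (S i).1) (fun z => ∑ t, (if hs t z ≠ (S i).2 then (1:ℝ) else 0)))
        * (1 - η) - Real.log k / η
      = ∑ i, p i * (((U (S i).1).sup' (hUne (S i).1)
          (fun z => ∑ t, (if hs t z ≠ (S i).2 then (1:ℝ) else 0))) * (1 - η)
          - Real.log k / η) := by
    have h1 : ∀ i : Fin m, p i * (((U (S i).1).sup' (hUne (S i).1)
          (fun z => ∑ t, (if hs t z ≠ (S i).2 then (1:ℝ) else 0))) * (1 - η)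
          - Real.log k / η)
        = p i * ((U (S i).1).sup' (hUne (S i).1)
          (fun z => ∑ t, (if hs t z ≠ (S i).2 then (1:ℝ) else 0))) * (1 - η)
          - p i * (Real.log k / η) := fun i => by ring
    simp only [h1]
    rw [Finset.sum_sub_distrib, ← Finset.sum_mul, ← Finset.sum_mul, hp1, one_mul]
  rw [hLHS]
  exact Finset.sum_le_sum fun i _ => mul_le_mul_of_nonneg_left (key i) (hp i).le
end
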